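/- On the duplex repeated path network 𝒢_R on N ≥ 3 agents with all agents using Protocol AND and seed set S₀ = {j}, for all indices with 1 < j < i < N (and symmetrically 1 < i < j < N), the probability that agent i is active at steady state of the multiplex LTM is ℙ_LTM(i) = (1/4)^{|i−j|}. -/

import Mathlib

open MeasureTheory

inductive Protocol
  | OR
  | AND
deriving DecidableEq

noncomputable def ltmStep {n m : ℕ} (w : Fin m → Fin n → Fin n → ℝ)
    (u : Fin n → Protocol) (μ : Fin n → Fin m → ℝ)
    (A : Finset (Fin n)) : Finset (Fin n) :=
  A ∪ Finset.univ.filter fun i =>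
    (u i = Protocol.OR ∧ ∃ k, μ i k < ∑ j ∈ A, w k i j) ∨
    (u i = Protocol.AND ∧ ∀ k, μ i k < ∑ j ∈ A, w k i j)

noncomputable def ltmSS {n m : ℕ} (w : Fin m → Fin n → Fin n → ℝ)
    (u : Fin n → Protocol) (S₀ : Finset (Fin n))
    (μ : Fin n → Fin m → ℝ) : Finset (Fin n) :=
  (ltmStep w u μ)^[n] S₀

noncomputable def thMeasure (n m : ℕ) : Measure (Fin n → Fin m → ℝ) :=
  Measure.pi fun _ => Measure.pi fun _ => volume.restrict (Set.Icc (0:ℝ) 1)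

noncomputable def pLTM {n m : ℕ} (w : Fin m → Fin n → Fin n → ℝ)
    (u : Fin n → Protocol) (S₀ : Finset (Fin n)) (i : Fin n) : ℝ :=
  (thMeasure n m {μ | i ∈ ltmSS w u S₀ μ}).toReal

def lemStep {n m : ℕ} (S₀ : Finset (Fin n)) (u : Fin n → Protocol)
    (σ : Fin n → Fin m → Fin n) (A : Finset (Fin n)) : Finset (Fin n) :=
  S₀ ∪ A ∪ Finset.univ.filter fun i =>
    (u i = Protocol.OR ∧ ∃ k, σ i k ∈ A) ∨
    (u i = Protocol.AND ∧ ∀ k, σ i k ∈ A)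

def UReachable {n m : ℕ} (S₀ : Finset (Fin n)) (u : Fin n → Protocol)
    (σ : Fin n → Fin m → Fin n) (i : Fin n) : Prop :=
  i ∈ (lemStep S₀ u σ)^[n] S₀

instance {n m : ℕ} (S₀ : Finset (Fin n)) (u : Fin n → Protocol)
    (σ : Fin n → Fin m → Fin n) (i : Fin n) : Decidable (UReachable S₀ u σ i) := by
  unfold UReachable; infer_instance

noncomputable def rProb {n m : ℕ} (w : Fin m → Fin n → Fin n → ℝ)
    (S₀ : Finset (Fin n)) (u : Fin n → Protocol) (i : Fin n) : ℝ :=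
  ∑ σ : Fin n → Fin m → Fin n,
    if UReachable S₀ u σ i then ∏ a : Fin n, ∏ k : Fin m, w k a (σ a k) else 0

noncomputable def casCen {n m : ℕ} (w : Fin m → Fin n → Fin n → ℝ)
    (u : Fin n → Protocol) (j : Fin n) : ℝ :=
  ∑ i : Fin n, pLTM w u {j} i

noncomputable def pathW (N : ℕ) (i j : Fin N) : ℝ :=
  if j.val = i.val + 1 ∨ i.val = j.val + 1 then
    (if i.val = 0 ∨ i.val = N - 1 then 1 else 1/2)
  else 0

noncomputable def cycleW (N : ℕ) (i j : Fin N) : ℝ :=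
  if (i.val + 1) % N = j.val ∨ (j.val + 1) % N = i.val then 1/2 else 0

noncomputable def permW2 (N : ℕ) (i j : Fin N) : ℝ :=
  if ((i.val + 1) % N = j.val ∨ (j.val + 1) % N = i.val) ∧
      ¬((i.val = N - 2 ∧ j.val = N - 1) ∨ (i.val = N - 1 ∧ j.val = N - 2)) then
    (if i.val = N - 2 ∨ i.val = N - 1 then 1 else 1/2)
  else 0

section Aux
open scoped Classical

variable {N : ℕ}

/-- threshold of agent `m` (as a ℕ index) is below 1/2 in both layers -/
def goodP (μ : Fin N → Fin 2 → ℝ) (m : ℕ) : Prop :=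
  ∀ (h : m < N) (k : Fin 2), μ ⟨m, h⟩ k < 1/2

def CRp (μ : Fin N → Fin 2 → ℝ) (j : Fin N) (t : ℕ) : Prop :=
  j.val < t ∧ ∀ m, j.val < m → m ≤ t → goodP μ m

def CLp (μ : Fin N → Fin 2 → ℝ) (j : Fin N) (t : ℕ) : Prop :=
  t < j.val ∧ ∀ m, t ≤ m → m < j.val → goodP μ m

def Qp (μ : Fin N → Fin 2 → ℝ) (l : Fin N) : Prop := ∀ k, μ l k < 1

noncomputable def ASet (μ : Fin N → Fin 2 → ℝ) (j : Fin N) : Finset (Fin N) :=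
  Finset.univ.filter fun l =>
    l = j ∨ CRp μ j l.val ∨ CLp μ j l.val ∨
    (l.val = N-1 ∧ (j.val = N-2 ∨ CRp μ j (N-2)) ∧ Qp μ l) ∨
    (l.val = 0 ∧ (j.val = 1 ∨ CLp μ j 1) ∧ Qp μ l)

lemma mem_ASet {μ : Fin N → Fin 2 → ℝ} {j l : Fin N} :
    l ∈ ASet μ j ↔ (l = j ∨ CRp μ j l.val ∨ CLp μ j l.val ∨
    (l.val = N-1 ∧ (j.val = N-2 ∨ CRp μ j (N-2)) ∧ Qp μ l) ∨
    (l.val = 0 ∧ (j.val = 1 ∨ CLp μ j 1) ∧ Qp μ l)) := by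
  simp [ASet]

lemma pathW_nonneg (N : ℕ) (i j : Fin N) : 0 ≤ pathW N i j := by
  unfold pathW; split_ifs <;> norm_num

lemma pathW_interior {l a b p : Fin N} (ha : a.val + 1 = l.val) (hb : b.val = l.val + 1)
    (h2 : l.val + 1 < N) :
    pathW N l p = (if p = a then 1/2 else 0) + (if p = b then 1/2 else 0) := by
  have hane : l.val ≠ 0 := by omega
  have hane2 : l.val ≠ N - 1 := by omega
  have h1 : (p = a) ↔ l.val = p.val + 1 := by rw [Fin.ext_iff]; omega
  have h2' : (p = b) ↔ p.val = l.val + 1 := by rw [Fin.ext_iff]; omega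
  unfold pathW
  simp only [h1, h2']
  split_ifs
  all_goals try norm_num
  all_goals omega

lemma sum_pathW_interior (A' : Finset (Fin N)) {l a b : Fin N}
    (ha : a.val + 1 = l.val) (hb : b.val = l.val + 1) (h2 : l.val + 1 < N) :
    ∑ p ∈ A', pathW N l p
      = (if a ∈ A' then (1/2:ℝ) else 0) + (if b ∈ A' then (1/2:ℝ) else 0) := by
  rw [Finset.sum_congr rfl fun p _ => pathW_interior ha hb h2, Finset.sum_add_distrib,
    Finset.sum_ite_eq' A' a fun _ => (1/2:ℝ), Finset.sum_ite_eq' A' b fun _ => (1/2:ℝ)]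

lemma pathW_endpoint {l c p : Fin N} (hc : c.val + 1 = l.val ∨ c.val = l.val + 1)
    (hl : l.val = 0 ∨ l.val = N - 1) (hN : 3 ≤ N) :
    pathW N l p = if p = c then 1 else 0 := by
  have hpl := p.isLt
  have hll := l.isLt
  have h1 : (p = c) ↔ (p.val = l.val + 1 ∨ l.val = p.val + 1) := by
    rw [Fin.ext_iff]; omega
  unfold pathW
  simp only [h1]
  split_ifs
  all_goals try norm_num
  all_goals omega

lemma sum_pathW_endpoint (A' : Finset (Fin N)) {l c : Fin N}
    (hc : c.val + 1 = l.val ∨ c.val = l.val + 1)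
    (hl : l.val = 0 ∨ l.val = N - 1) (hN : 3 ≤ N) :
    ∑ p ∈ A', pathW N l p = (if c ∈ A' then (1:ℝ) else 0) := by
  rw [Finset.sum_congr rfl fun p _ => pathW_endpoint hc hl hN,
    Finset.sum_ite_eq' A' c fun _ => (1:ℝ)]

lemma ASet_closed (μ : Fin N → Fin 2 → ℝ) (j : Fin N) (hN : 3 ≤ N)
    (hj1 : 1 ≤ j.val) (hj2 : j.val < N - 1)
    (hbox : ∀ l k, 0 ≤ μ l k) :
    ltmStep (fun _ : Fin 2 => pathW N) (fun _ => Protocol.AND) μ (ASet μ j) ⊆ ASet μ j := by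
  intro l hl
  rw [ltmStep, Finset.mem_union] at hl
  rcases hl with h | h
  · exact h
  rw [Finset.mem_filter] at h
  rcases h.2 with ⟨hOR, _⟩ | ⟨_, hAND⟩
  · exact absurd hOR (by simp)
  by_contra hmem
  have hll := l.isLt
  have hjl := j.isLt
  by_cases hl0 : l.val = 0
  · -- left endpoint
    set c : Fin N := ⟨1, by omega⟩ with hcdef
    have hsum := sum_pathW_endpoint (ASet μ j) (l := l) (c := c)
      (Or.inr (by simp [hcdef]; omega)) (Or.inl hl0) hN
    by_cases hc : c ∈ ASet μ j
    · apply hmem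
      rw [mem_ASet]
      refine Or.inr (Or.inr (Or.inr (Or.inr ⟨hl0, ?_, ?_⟩)))
      · rcases mem_ASet.1 hc with h1 | h1 | h1 | h1 | h1
        · left; rw [← h1]
        · exact absurd h1.1 (by simp [hcdef]; omega)
        · right; exact h1
        · exact absurd h1.1 (by simp [hcdef]; omega)
        · exact absurd h1.1 (by simp [hcdef])
      · intro k
        have := hAND k
        rwa [hsum, if_pos hc] at this
    · have h0 := hAND 0
      rw [hsum, if_neg hc] at h0
      exact absurd h0 (not_lt.2 (hbox l 0))
  by_cases hlN : l.val = N - 1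
  · -- right endpoint
    set c : Fin N := ⟨N - 2, by omega⟩ with hcdef
    have hsum := sum_pathW_endpoint (ASet μ j) (l := l) (c := c)
      (Or.inl (by simp [hcdef]; omega)) (Or.inr hlN) hN
    by_cases hc : c ∈ ASet μ j
    · apply hmem
      rw [mem_ASet]
      refine Or.inr (Or.inr (Or.inr (Or.inl ⟨hlN, ?_, ?_⟩)))
      · rcases mem_ASet.1 hc with h1 | h1 | h1 | h1 | h1
        · left; rw [← h1]
        · right; exact h1
        · exact absurd h1.1 (by simp [hcdef]; omega)
        · exact absurd h1.1 (by simp [hcdef]; omega)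
        · exact absurd h1.1 (by simp [hcdef]; omega)
      · intro k
        have := hAND k
        rwa [hsum, if_pos hc] at this
    · have h0 := hAND 0
      rw [hsum, if_neg hc] at h0
      exact absurd h0 (not_lt.2 (hbox l 0))
  -- interior
  have hint1 : 1 ≤ l.val := by omega
  have hint2 : l.val + 1 < N := by omega
  set a : Fin N := ⟨l.val - 1, by omega⟩ with hadef
  set b : Fin N := ⟨l.val + 1, by omega⟩ with hbdef
  have haval : a.val + 1 = l.val := by simp [hadef]; omega
  have hbval : b.val = l.val + 1 := by simp [hbdef]
  have hsum := sum_pathW_interior (ASet μ j) haval hbval hint2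
  rcases lt_trichotomy j.val l.val with hlt | heq | hgt
  · -- l to the right of j
    have hbA : b ∈ ASet μ j → l ∈ ASet μ j := by
      intro hb
      rcases mem_ASet.1 hb with h1 | h1 | h1 | h1 | h1
      · exact absurd (congrArg Fin.val h1) (by omega)
      · apply mem_ASet.2; right; left
        exact ⟨hlt, fun m hm1 hm2 => h1.2 m hm1 (by omega)⟩
      · exact absurd h1.1 (by omega)
      · rcases h1.2.1 with h2 | h2
        · exact absurd h2 (by omega)
        · apply mem_ASet.2; right; left
          have : N - 2 = l.val := by omega
          rwa [this] at h2
      · exact absurd h1.1 (by omega)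
    have hbnA : b ∉ ASet μ j := fun hb => hmem (hbA hb)
    by_cases haA : a ∈ ASet μ j
    · have haA' : a = j ∨ CRp μ j a.val := by
        rcases mem_ASet.1 haA with h1 | h1 | h1 | h1 | h1
        · exact Or.inl h1
        · exact Or.inr h1
        · exact absurd h1.1 (by omega)
        · exact absurd h1.1 (by omega)
        · exact absurd h1.1 (by omega)
      by_cases hP : goodP μ l.val
      · apply hmem
        apply mem_ASet.2; right; left
        refine ⟨hlt, fun m hm1 hm2 => ?_⟩
        by_cases hm : m = l.val
        · rwa [hm]
        · have hma : m ≤ l.val - 1 := by omega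
          rcases haA' with h2 | h2
          · exact absurd (congrArg Fin.val h2) (by omega)
          · exact h2.2 m hm1 (by omega)
      · rw [goodP] at hP
        push_neg at hP
        obtain ⟨hl', k, hk⟩ := hP
        have h2 := hAND k
        rw [hsum, if_pos haA, if_neg hbnA] at h2
        have : (⟨l.val, hl'⟩ : Fin N) = l := rfl
        rw [this] at hk
        linarith
    · have h0 := hAND 0
      rw [hsum, if_neg haA, if_neg hbnA] at h0
      have := hbox l 0
      linarith
  · exact hmem (mem_ASet.2 (Or.inl (Fin.ext heq.symm)))
  · -- l to the left of j
    have haA : a ∈ ASet μ j → l ∈ ASet μ j := by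
      intro ha
      rcases mem_ASet.1 ha with h1 | h1 | h1 | h1 | h1
      · exact absurd (congrArg Fin.val h1) (by omega)
      · exact absurd h1.1 (by omega)
      · apply mem_ASet.2; right; right; left
        exact ⟨hgt, fun m hm1 hm2 => h1.2 m (by omega) hm2⟩
      · exact absurd h1.1 (by omega)
      · rcases h1.2.1 with h2 | h2
        · exact absurd h2 (by omega)
        · apply mem_ASet.2; right; right; left
          have : (1:ℕ) = l.val := by omega
          rwa [this] at h2
    have hanA : a ∉ ASet μ j := fun ha => hmem (haA ha)
    by_cases hbA : b ∈ ASet μ j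
    · have hbA' : b = j ∨ CLp μ j b.val := by
        rcases mem_ASet.1 hbA with h1 | h1 | h1 | h1 | h1
        · exact Or.inl h1
        · exact absurd h1.1 (by omega)
        · exact Or.inr h1
        · exact absurd h1.1 (by omega)
        · exact absurd h1.1 (by omega)
      by_cases hP : goodP μ l.val
      · apply hmem
        apply mem_ASet.2; right; right; left
        refine ⟨hgt, fun m hm1 hm2 => ?_⟩
        by_cases hm : m = l.val
        · rwa [hm]
        · have hmb : l.val + 1 ≤ m := by omega
          rcases hbA' with h2 | h2
          · exact absurd (congrArg Fin.val h2) (by omega)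
          · exact h2.2 m (by omega) hm2
      · rw [goodP] at hP
        push_neg at hP
        obtain ⟨hl', k, hk⟩ := hP
        have h2 := hAND k
        rw [hsum, if_neg hanA, if_pos hbA] at h2
        have : (⟨l.val, hl'⟩ : Fin N) = l := rfl
        rw [this] at hk
        linarith
    · have h0 := hAND 0
      rw [hsum, if_neg hanA, if_neg hbA] at h0
      have := hbox l 0
      linarith

lemma ltmStep_mono {n m : ℕ} {w : Fin m → Fin n → Fin n → ℝ}
    (hw : ∀ k i p, 0 ≤ w k i p) (u : Fin n → Protocol) (μ : Fin n → Fin m → ℝ)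
    {X Y : Finset (Fin n)} (h : X ⊆ Y) :
    ltmStep w u μ X ⊆ ltmStep w u μ Y := by
  intro l hl
  rw [ltmStep, Finset.mem_union] at hl ⊢
  have hsum : ∀ k, ∑ p ∈ X, w k l p ≤ ∑ p ∈ Y, w k l p := fun k =>
    Finset.sum_le_sum_of_subset_of_nonneg h (fun p _ _ => hw k l p)
  rcases hl with hl | hl
  · exact Or.inl (h hl)
  · right
    rw [Finset.mem_filter] at hl ⊢
    refine ⟨hl.1, ?_⟩
    rcases hl.2 with ⟨h1, k, h2⟩ | ⟨h1, h2⟩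
    · exact Or.inl ⟨h1, k, lt_of_lt_of_le h2 (hsum k)⟩
    · exact Or.inr ⟨h1, fun k => lt_of_lt_of_le (h2 k) (hsum k)⟩

lemma iter_subset_ASet (μ : Fin N → Fin 2 → ℝ) (j : Fin N) (hN : 3 ≤ N)
    (hj1 : 1 ≤ j.val) (hj2 : j.val < N - 1)
    (hbox : ∀ l k, 0 ≤ μ l k) (t : ℕ) :
    (ltmStep (fun _ : Fin 2 => pathW N) (fun _ => Protocol.AND) μ)^[t] {j} ⊆ ASet μ j := by
  induction t with
  | zero =>
    simp only [Function.iterate_zero, id]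
    intro x hx
    rw [Finset.mem_singleton] at hx
    exact mem_ASet.2 (Or.inl hx)
  | succ t ih =>
    rw [Function.iterate_succ_apply']
    exact (ltmStep_mono (fun k i p => pathW_nonneg N i p) _ μ ih).trans
      (ASet_closed μ j hN hj1 hj2 hbox)

lemma iter_mono_step (w : Fin 2 → Fin N → Fin N → ℝ) (u : Fin N → Protocol)
    (μ : Fin N → Fin 2 → ℝ) (S₀ : Finset (Fin N)) {s t : ℕ} (h : s ≤ t) :
    (ltmStep w u μ)^[s] S₀ ⊆ (ltmStep w u μ)^[t] S₀ := by
  induction t with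
  | zero => simp_all
  | succ t ih =>
    rcases Nat.lt_or_ge s (t+1) with h' | h'
    · refine (ih (by omega)).trans ?_
      rw [Function.iterate_succ_apply']
      exact Finset.subset_union_left
    · have : s = t + 1 := by omega
      subst this; rfl

/-- the "between" predicate -/
def BtwP (i j m : Fin N) : Prop :=
  (j.val < m.val ∧ m.val ≤ i.val) ∨ (i.val ≤ m.val ∧ m.val < j.val)

lemma key_iff (μ : Fin N → Fin 2 → ℝ) (hN : 3 ≤ N) (i j : Fin N)
    (hi1 : 1 ≤ i.val) (hi2 : i.val < N - 1)
    (hj1 : 1 ≤ j.val) (hj2 : j.val < N - 1) (hij : i ≠ j)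
    (hbox : ∀ l k, 0 ≤ μ l k) :
    i ∈ ltmSS (fun _ : Fin 2 => pathW N) (fun _ => Protocol.AND) {j} μ ↔
      ∀ m : Fin N, BtwP i j m → ∀ k, μ m k < 1/2 := by
  have hiN := i.isLt
  have hjN := j.isLt
  constructor
  · intro hmem m hm k
    have hA := iter_subset_ASet μ j hN hj1 hj2 hbox N hmem
    have key : ∀ m' : ℕ, BtwP i j m → m'= m.val → goodP μ m' := by
      intro m' hm' hme
      rcases mem_ASet.1 hA with h1 | h1 | h1 | h1 | h1
      · exact absurd h1 hij
      · obtain ⟨h1a, h1b⟩ := h1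
        rcases hm' with h2 | h2
        · exact h1b m' (by omega) (by omega)
        · exact absurd h2 (by omega)
      · obtain ⟨h1a, h1b⟩ := h1
        rcases hm' with h2 | h2
        · exact absurd h2 (by omega)
        · exact h1b m' (by omega) (by omega)
      · exact absurd h1.1 (by omega)
      · exact absurd h1.1 (by omega)
    have := key m.val hm rfl m.isLt k
    simpa using this
  · intro hbet
    rcases lt_or_gt_of_ne (fun h : i.val = j.val => hij (Fin.ext h)) with hlt | hgt
    · -- i < j : spread leftwards from j
      have claim : ∀ t, ∀ _ : t ≤ j.val - i.val,
          (⟨j.val - t, by omega⟩ : Fin N) ∈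
            (ltmStep (fun _ : Fin 2 => pathW N) (fun _ => Protocol.AND) μ)^[t] {j} := by
        intro t
        induction t with
        | zero => intro _; simp
        | succ t ih =>
          intro ht
          have hx := ih (by omega)
          rw [Function.iterate_succ_apply']
          rw [ltmStep]
          apply Finset.mem_union_right
          rw [Finset.mem_filter]
          refine ⟨Finset.mem_univ _, Or.inr ⟨rfl, fun k => ?_⟩⟩
          set y : Fin N := ⟨j.val - (t+1), by omega⟩ with hydef
          set x : Fin N := ⟨j.val - t, by omega⟩ with hxdef
          have hy1 : μ y k < 1/2 := hbet y (Or.inr ⟨by simp [hydef]; omega, by simp [hydef]; omega⟩) k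
          have hw : pathW N y x = 1/2 := by
            unfold pathW
            rw [if_pos (Or.inl (by simp [hxdef, hydef]; omega))]
            rw [if_neg (by simp [hydef]; omega)]
          have hle : (1/2:ℝ) ≤ ∑ p ∈ (ltmStep (fun _ : Fin 2 => pathW N) (fun _ => Protocol.AND) μ)^[t] {j}, pathW N y p := by
            rw [← hw]
            exact Finset.single_le_sum (fun p _ => pathW_nonneg N y p) hx
          linarith
      have h1 := claim (j.val - i.val) le_rfl
      have h2 : (⟨j.val - (j.val - i.val), by omega⟩ : Fin N) = i := by
        rw [Fin.ext_iff]; simp; omega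
      rw [h2] at h1
      exact iter_mono_step _ _ _ _ (by omega) h1
    · -- j < i : spread rightwards from j
      have claim : ∀ t, ∀ _ : t ≤ i.val - j.val,
          (⟨j.val + t, by omega⟩ : Fin N) ∈
            (ltmStep (fun _ : Fin 2 => pathW N) (fun _ => Protocol.AND) μ)^[t] {j} := by
        intro t
        induction t with
        | zero => intro _; simp
        | succ t ih =>
          intro ht
          have hx := ih (by omega)
          rw [Function.iterate_succ_apply']
          rw [ltmStep]
          apply Finset.mem_union_right
          rw [Finset.mem_filter]
          refine ⟨Finset.mem_univ _, Or.inr ⟨rfl, fun k => ?_⟩⟩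
          set y : Fin N := ⟨j.val + (t+1), by omega⟩ with hydef
          set x : Fin N := ⟨j.val + t, by omega⟩ with hxdef
          have hy1 : μ y k < 1/2 := hbet y (Or.inl ⟨by simp [hydef], by simp [hydef]; omega⟩) k
          have hw : pathW N y x = 1/2 := by
            unfold pathW
            rw [if_pos (Or.inr (by simp [hxdef, hydef]; omega))]
            rw [if_neg (by simp [hydef]; omega)]
          have hle : (1/2:ℝ) ≤ ∑ p ∈ (ltmStep (fun _ : Fin 2 => pathW N) (fun _ => Protocol.AND) μ)^[t] {j}, pathW N y p := by
            rw [← hw]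
            exact Finset.single_le_sum (fun p _ => pathW_nonneg N y p) hx
          linarith
      have h1 := claim (i.val - j.val) le_rfl
      have h2 : (⟨j.val + (i.val - j.val), by omega⟩ : Fin N) = i := by
        rw [Fin.ext_iff]; simp; omega
      rw [h2] at h1
      exact iter_mono_step _ _ _ _ (by omega) h1

lemma vr_univ : (volume.restrict (Set.Icc (0:ℝ) 1)) Set.univ = 1 := by
  rw [Measure.restrict_apply_univ, Real.volume_Icc]
  norm_num

lemma vr_Ici : (volume.restrict (Set.Icc (0:ℝ) 1)) (Set.Ici 0) = 1 := by
  rw [Measure.restrict_apply measurableSet_Ici]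
  have : Set.Ici (0:ℝ) ∩ Set.Icc 0 1 = Set.Icc 0 1 := by
    ext x; simp only [Set.mem_inter_iff, Set.mem_Ici, Set.mem_Icc]; tauto
  rw [this, Real.volume_Icc]; norm_num

lemma vr_Iio : (volume.restrict (Set.Icc (0:ℝ) 1)) (Set.Iio (1/2)) = ENNReal.ofReal (1/2) := by
  rw [Measure.restrict_apply measurableSet_Iio]
  have : Set.Iio (1/2:ℝ) ∩ Set.Icc 0 1 = Set.Ico 0 (1/2) := by
    ext x
    simp only [Set.mem_inter_iff, Set.mem_Iio, Set.mem_Icc, Set.mem_Ico]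
    constructor
    · rintro ⟨h1, h2, h3⟩; exact ⟨h2, h1⟩
    · rintro ⟨h1, h2⟩; exact ⟨h2, h1, by linarith⟩
  rw [this, Real.volume_Ico]; norm_num

end Aux

open scoped Classical

/-- on the duplex repeated path network on `N ≥ 3` agents with all
agents using Protocol AND and seed `{j}`, for interior agents `i ≠ j`,
ℙ_LTM(i) = (1/4)^{|i−j|}. (0-indexed agents.) -/
theorem repeated_path_AND_prob (N : ℕ) (hN : 3 ≤ N) (i j : Fin N)
    (hi1 : 1 ≤ i.val) (hi2 : i.val < N - 1)
    (hj1 : 1 ≤ j.val) (hj2 : j.val < N - 1) (hij : i ≠ j) :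
    pLTM (fun _ : Fin 2 => pathW N) (fun _ => Protocol.AND) {j} i =
      (1/4 : ℝ) ^ (Nat.dist i.val j.val) := by
  have thdef : thMeasure N 2
      = Measure.pi fun _ : Fin N => Measure.pi fun _ : Fin 2 => volume.restrict (Set.Icc (0:ℝ) 1) := rfl
  have hpLTMdef : pLTM (fun _ : Fin 2 => pathW N) (fun _ => Protocol.AND) {j} i
      = (thMeasure N 2 {μ | i ∈ ltmSS (fun _ : Fin 2 => pathW N) (fun _ => Protocol.AND) {j} μ}).toReal := rfl
  set B : Set (Fin N → Fin 2 → ℝ) :=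
    Set.pi Set.univ (fun _ => Set.pi Set.univ fun _ => Set.Ici (0:ℝ)) with hBdef
  have hBmeas : MeasurableSet B :=
    MeasurableSet.univ_pi fun _ => MeasurableSet.univ_pi fun _ => measurableSet_Ici
  have hBfull : thMeasure N 2 B = 1 := by
    rw [thdef, hBdef, Measure.pi_pi]
    have hin : (Measure.pi fun _ : Fin 2 => volume.restrict (Set.Icc (0:ℝ) 1))
        (Set.pi Set.univ fun _ => Set.Ici (0:ℝ)) = 1 := by
      rw [Measure.pi_pi, Finset.prod_congr rfl fun k _ => vr_Ici]
      exact Finset.prod_const_one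
    rw [Finset.prod_congr rfl fun l _ => hin]
    exact Finset.prod_const_one
  have huniv : thMeasure N 2 Set.univ = 1 := by
    rw [thdef, Measure.pi_univ]
    have hin : (Measure.pi fun _ : Fin 2 => volume.restrict (Set.Icc (0:ℝ) 1))
        Set.univ = 1 := by
      rw [Measure.pi_univ, Finset.prod_congr rfl fun k _ => vr_univ]
      exact Finset.prod_const_one
    rw [Finset.prod_congr rfl fun l _ => hin]
    exact Finset.prod_const_one
  have hcompl : thMeasure N 2 Bᶜ = 0 := by
    rw [measure_compl hBmeas (by rw [hBfull]; exact ENNReal.one_ne_top), hBfull, huniv]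
    simp
  have hae : ∀ᵐ μ' ∂(thMeasure N 2), μ' ∈ B := by
    rw [MeasureTheory.ae_iff]
    exact hcompl
  have hmeq : thMeasure N 2 {μ | i ∈ ltmSS (fun _ : Fin 2 => pathW N) (fun _ => Protocol.AND) {j} μ}
      = thMeasure N 2 {μ' : Fin N → Fin 2 → ℝ | ∀ m : Fin N, BtwP i j m → ∀ k, μ' m k < 1/2} := by
    apply measure_congr
    rw [Filter.eventuallyEq_set]
    filter_upwards [hae] with μ' hb
    have hbox : ∀ l k, 0 ≤ μ' l k := by
      intro l k
      rw [hBdef] at hb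
      simp only [Set.mem_pi, Set.mem_univ, Set.mem_Ici, forall_true_left] at hb
      exact hb l k
    exact key_iff μ' hN i j hi1 hi2 hj1 hj2 hij hbox
  have hEpi : {μ' : Fin N → Fin 2 → ℝ | ∀ m : Fin N, BtwP i j m → ∀ k, μ' m k < 1/2}
      = Set.pi Set.univ (fun l => Set.pi Set.univ (fun _ : Fin 2 =>
          if BtwP i j l then Set.Iio (1/2:ℝ) else Set.univ)) := by
    ext μ'
    simp only [Set.mem_setOf_eq, Set.mem_pi, Set.mem_univ, forall_true_left]
    constructor
    · intro h l k
      by_cases hb : BtwP i j l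
      · rw [if_pos hb]; exact h l hb k
      · rw [if_neg hb]; trivial
    · intro h m hb k
      have := h m k
      rwa [if_pos hb] at this
  rw [hpLTMdef, hmeq, hEpi, thdef, Measure.pi_pi]
  have hfac : ∀ l : Fin N, (Measure.pi fun _ : Fin 2 => volume.restrict (Set.Icc (0:ℝ) 1))
      (Set.pi Set.univ fun _ : Fin 2 => if BtwP i j l then Set.Iio (1/2:ℝ) else Set.univ)
      = if BtwP i j l then ENNReal.ofReal (1/4) else 1 := by
    intro l
    rw [Measure.pi_pi]
    by_cases hb : BtwP i j l
    · simp only [if_pos hb, vr_Iio, Finset.prod_const, Finset.card_univ, Fintype.card_fin]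
      rw [← ENNReal.ofReal_pow (by norm_num)]
      norm_num
    · simp only [if_neg hb, vr_univ, Finset.prod_const, one_pow]
  rw [Finset.prod_congr rfl fun l _ => hfac l, ← Finset.prod_filter, Finset.prod_const]
  have hcard : (Finset.univ.filter (fun l : Fin N => BtwP i j l)).card = Nat.dist i.val j.val := by
    rcases lt_or_gt_of_ne (fun h : i.val = j.val => hij (Fin.ext h)) with hlt | hgt
    · have heq : Finset.univ.filter (fun l : Fin N => BtwP i j l) = Finset.Ico i j := by
        ext l
        rw [Finset.mem_filter]
        simp only [Finset.mem_filter, Finset.mem_univ, true_and, Finset.mem_Ico, BtwP,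
          Fin.le_def, Fin.lt_def]
        omega
      rw [heq, Fin.card_Ico, Nat.dist]; omega
    · have heq : Finset.univ.filter (fun l : Fin N => BtwP i j l) = Finset.Ioc j i := by
        ext l
        rw [Finset.mem_filter]
        simp only [Finset.mem_filter, Finset.mem_univ, true_and, Finset.mem_Ioc, BtwP,
          Fin.le_def, Fin.lt_def]
        omega
      rw [heq, Fin.card_Ioc, Nat.dist]; omega
  rw [hcard, ENNReal.toReal_pow, ENNReal.toReal_ofReal (by norm_num)]
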